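/- Let (X,f) be a dynamical system, x ∈ X a point whose ω-limit set is finite of cardinality p. Then for every sufficiently small ε > 0 and every positive integer m, the asymptotic correlation sum exists and equals 1/p, i.e. lim_{n→∞} C_m(x,n,ε) = 1/p, and consequently the asymptotic recurrence determinism exists and equals 1. -/

import Mathlib

open Filter Metric Set
open scoped Classical

namespace RQA

variable {X : Type*} [MetricSpace X]

/-- Correlation sum `C_m(x,n,ε)` with respect to the Bowen metric `ρ_m`:
`ρ_m(f^[i] x, f^[j] x) ≤ ε ↔ ∀ k < m, dist (f^[i+k] x) (f^[j+k] x) ≤ ε`. -/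
noncomputable def corrSum (f : X → X) (x : X) (m n : ℕ) (ε : ℝ) : ℝ :=
  (((Finset.range n ×ˢ Finset.range n).filter
      (fun p => ∀ k < m, dist (f^[p.1 + k] x) (f^[p.2 + k] x) ≤ ε)).card : ℝ) / (n : ℝ) ^ 2

/-- Correlation sum `C_∞(x,n,ε)` with respect to the metric `ρ_∞`. -/
noncomputable def corrSumInf (f : X → X) (x : X) (n : ℕ) (ε : ℝ) : ℝ :=
  (((Finset.range n ×ˢ Finset.range n).filter
      (fun p => ∀ k : ℕ, dist (f^[p.1 + k] x) (f^[p.2 + k] x) ≤ ε)).card : ℝ) / (n : ℝ) ^ 2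

/-- Lower asymptotic correlation sum `C̲_m(x,ε)`. -/
noncomputable def lowerCorr (f : X → X) (x : X) (m : ℕ) (ε : ℝ) : ℝ :=
  liminf (fun n => corrSum f x m n ε) atTop

/-- Upper asymptotic correlation sum `C̄_m(x,ε)`. -/
noncomputable def upperCorr (f : X → X) (x : X) (m : ℕ) (ε : ℝ) : ℝ :=
  limsup (fun n => corrSum f x m n ε) atTop

/-- Recurrence `m`-determinism `DET_m(x,n,ε) = C_m(x,n,ε)/C_1(x,n,ε)`. -/
noncomputable def detSum (f : X → X) (x : X) (m n : ℕ) (ε : ℝ) : ℝ :=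
  corrSum f x m n ε / corrSum f x 1 n ε

/-- Recurrence `∞`-determinism `DET_∞(x,n,ε) = C_∞(x,n,ε)/C_1(x,n,ε)`. -/
noncomputable def detSumInf (f : X → X) (x : X) (n : ℕ) (ε : ℝ) : ℝ :=
  corrSumInf f x n ε / corrSum f x 1 n ε

/-- Lower asymptotic recurrence determinism `DET̲_m(x,ε)`. -/
noncomputable def lowerDet (f : X → X) (x : X) (m : ℕ) (ε : ℝ) : ℝ :=
  liminf (fun n => detSum f x m n ε) atTop

/-- Upper asymptotic recurrence determinism `DET̄_m(x,ε)`. -/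
noncomputable def upperDet (f : X → X) (x : X) (m : ℕ) (ε : ℝ) : ℝ :=
  limsup (fun n => detSum f x m n ε) atTop

/-- `C̄_∞(x,ε) = lim_m C̄_m(x,ε)`; since `m ↦ C̄_m(x,ε)` is non-increasing,
the limit equals the infimum over `m ≥ 1`. -/
noncomputable def upperCorrInf (f : X → X) (x : X) (ε : ℝ) : ℝ :=
  ⨅ m : ℕ, upperCorr f x (m + 1) ε

/-- `C̲_∞(x,ε) = lim_m C̲_m(x,ε)` (a limit of a non-increasing sequence). -/
noncomputable def lowerCorrInf (f : X → X) (x : X) (ε : ℝ) : ℝ :=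
  ⨅ m : ℕ, lowerCorr f x (m + 1) ε

/-- `DET̄_∞(x,ε) = lim_m DET̄_m(x,ε)` (a limit of a non-increasing sequence). -/
noncomputable def upperDetInf (f : X → X) (x : X) (ε : ℝ) : ℝ :=
  ⨅ m : ℕ, upperDet f x (m + 1) ε

/-- `DET̲_∞(x,ε) = lim_m DET̲_m(x,ε)` (a limit of a non-increasing sequence). -/
noncomputable def lowerDetInf (f : X → X) (x : X) (ε : ℝ) : ℝ :=
  ⨅ m : ℕ, lowerDet f x (m + 1) ε

/-- The ω-limit set of `x`: the set of limit points of the trajectory `(f^[n] x)`. -/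
def omegaSet (f : X → X) (x : X) : Set X :=
  {y | ∃ φ : ℕ → ℕ, StrictMono φ ∧ Tendsto (fun n => f^[φ n] x) atTop (nhds y)}

/-- Distance between two subsets of `ℝ`. -/
noncomputable def setDist (A B : Set ℝ) : ℝ :=
  sInf {d | ∃ a ∈ A, ∃ b ∈ B, d = dist a b}

/-- The binary word of length `t` given by the binary digits of `n`
(the 2-adic encoding, least significant digit first; addition of integers to
words is addition with carry from left to right, i.e. ordinary addition of the
encoded values modulo `2^t`). -/
def word (t n : ℕ) : Fin t → Bool := fun i => n.testBit i.val

/-- The value `∑ w_i 2^i` of a binary word under the 2-adic encoding. -/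
def encodeWord {t : ℕ} (w : Fin t → Bool) : ℕ :=
  ∑ i : Fin t, if w i then 2 ^ i.val else 0

end RQA

open RQA

section Aux

open Filter Metric Set
open scoped Classical

variable {X : Type*} [MetricSpace X]

lemma RQA.omega_nonempty [CompactSpace X] (f : X → X) (x : X) :
    (omegaSet f x).Nonempty := by
  obtain ⟨z, φ, hφ, hc⟩ := CompactSpace.tendsto_subseq (fun n => f^[n] x)
  exact ⟨z, φ, hφ, hc⟩

lemma RQA.omega_inv {f : X → X} (hf : Continuous f) {x y : X}
    (hy : y ∈ omegaSet f x) : f y ∈ omegaSet f x := by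
  obtain ⟨φ, hφ, hc⟩ := hy
  refine ⟨fun n => φ n + 1, fun a b h => by simpa using hφ h, ?_⟩
  have h2 : Tendsto (fun n => f (f^[φ n] x)) atTop (nhds (f y)) := (hf.tendsto y).comp hc
  simpa [Function.iterate_succ_apply'] using h2

lemma RQA.omega_attract [CompactSpace X] (f : X → X) (x : X) {δ : ℝ} (hδ : 0 < δ) :
    ∀ᶠ n in atTop, ∃ y ∈ omegaSet f x, dist (f^[n] x) y < δ := by
  by_contra h
  rw [Filter.not_eventually] at h
  have h' : ∃ᶠ n in atTop, ∀ y ∈ omegaSet f x, δ ≤ dist (f^[n] x) y := by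
    apply h.mono; intro n hn; push_neg at hn; exact hn
  obtain ⟨φ, hφ, hbad⟩ := Filter.extraction_of_frequently_atTop h'
  obtain ⟨z, σ, hσ, hconv⟩ := CompactSpace.tendsto_subseq (fun k => f^[φ k] x)
  have hz : z ∈ omegaSet f x := ⟨φ ∘ σ, hφ.comp hσ, hconv⟩
  have hd : Tendsto (fun k => dist (f^[φ (σ k)] x) z) atTop (nhds (dist z z)) :=
    hconv.dist tendsto_const_nhds
  rw [dist_self] at hd
  obtain ⟨k, hk⟩ := ((hd.eventually (eventually_lt_nhds hδ)).and (Filter.Eventually.of_forall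
    (fun k => hbad (σ k) z hz))).exists
  exact absurd hk.2 (not_le.mpr hk.1)

lemma RQA.exists_sep {s : Set X} (hs : s.Finite) :
    ∃ δ : ℝ, 0 < δ ∧ ∀ y ∈ s, ∀ z ∈ s, y ≠ z → δ ≤ dist y z := by
  classical
  set F := hs.toFinset with hF
  rcases F.offDiag.eq_empty_or_nonempty with h | h
  · refine ⟨1, one_pos, fun y hy z hz hyz => absurd ?_ (Finset.eq_empty_iff_forall_notMem.mp h (y, z))⟩
    exact Finset.mem_offDiag.mpr ⟨hs.mem_toFinset.mpr hy, hs.mem_toFinset.mpr hz, hyz⟩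
  · set D := F.offDiag.image (fun q => dist q.1 q.2) with hD
    have hDne : D.Nonempty := h.image _
    refine ⟨D.min' hDne, ?_, ?_⟩
    · obtain ⟨q, hq, hqe⟩ := Finset.mem_image.mp (D.min'_mem hDne)
      rw [← hqe]
      exact dist_pos.mpr (Finset.mem_offDiag.mp hq).2.2
    · intro y hy z hz hne
      exact D.min'_le _ (Finset.mem_image.mpr ⟨(y, z),
        Finset.mem_offDiag.mpr ⟨hs.mem_toFinset.mpr hy, hs.mem_toFinset.mpr hz, hne⟩, rfl⟩)

lemma RQA.count_res (p r n : ℕ) (hp : 0 < p) (hr : r < p) :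
    ((Finset.range n).filter (fun i => i % p = r)).card = (n + p - 1 - r) / p := by
  classical
  have key : ∀ k : ℕ, k < (n + p - 1 - r) / p ↔ p * k + r < n := by
    intro k
    have e : (k + 1) * p = p * k + p := by ring
    rw [Nat.lt_iff_add_one_le, Nat.le_div_iff_mul_le hp, e]
    omega
  have himg : (Finset.range n).filter (fun i => i % p = r)
      = (Finset.range ((n + p - 1 - r) / p)).image (fun k => p * k + r) := by
    ext i
    simp only [Finset.mem_filter, Finset.mem_range, Finset.mem_image]
    constructor
    · rintro ⟨hin, hir⟩
      have hdm := Nat.div_add_mod i p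
      rw [hir] at hdm
      exact ⟨i / p, (key _).mpr (by rw [hdm]; exact hin), hdm⟩
    · rintro ⟨k, hk, rfl⟩
      exact ⟨(key k).mp hk, by simp [Nat.mul_add_mod, Nat.mod_eq_of_lt hr]⟩
  rw [himg, Finset.card_image_of_injective _ (fun a b h => by
    have : p * a = p * b := by omega
    exact Nat.eq_of_mul_eq_mul_left hp this), Finset.card_range]

lemma RQA.cardB (p n : ℕ) (hp : 0 < p) :
    ((Finset.range n ×ˢ Finset.range n).filter (fun q : ℕ × ℕ => q.1 % p = q.2 % p)).card
      = ∑ r ∈ Finset.range p, (((Finset.range n).filter (fun i => i % p = r)).card) ^ 2 := by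
  classical
  rw [Finset.card_eq_sum_card_fiberwise (f := fun q : ℕ × ℕ => q.1 % p) (t := Finset.range p)
      (fun q _ => Finset.mem_range.mpr (Nat.mod_lt _ hp))]
  refine Finset.sum_congr rfl fun r hr => ?_
  have hfib : ((Finset.range n ×ˢ Finset.range n).filter
        (fun q : ℕ × ℕ => q.1 % p = q.2 % p)).filter (fun q => q.1 % p = r)
      = ((Finset.range n).filter (fun i => i % p = r)) ×ˢ
        ((Finset.range n).filter (fun i => i % p = r)) := by
    ext ⟨i, j⟩
    simp only [Finset.mem_filter, Finset.mem_product, Finset.mem_range]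
    constructor
    · rintro ⟨⟨⟨hi, hj⟩, hij⟩, hir⟩
      exact ⟨⟨hi, hir⟩, hj, by rw [← hij]; exact hir⟩
    · rintro ⟨⟨hi, hir⟩, hj, hjr⟩
      exact ⟨⟨⟨hi, hj⟩, by rw [hir, hjr]⟩, hir⟩
  rw [hfib, Finset.card_product, sq]

lemma RQA.periodic_struct {α : Type*} [DecidableEq α] (S : Finset α) (p : ℕ) (hp : S.card = p)
    (g : ℕ → α) (F : α → α) (N : ℕ)
    (H1 : ∀ n, N ≤ n → g n ∈ S)
    (H2 : ∀ n, N ≤ n → g (n + 1) = F (g n))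
    (H3 : ∀ y ∈ S, ∀ K, ∃ n, K ≤ n ∧ g n = y) :
    ∃ M, N ≤ M ∧ ∀ i, M ≤ i → ∀ j, M ≤ j → (g i = g j ↔ i % p = j % p) := by
  have hp0 : 0 < p := hp ▸ Finset.card_pos.mpr ⟨g N, H1 N le_rfl⟩
  obtain ⟨k, hk, l, hl, hkl, hgkl⟩ :=
    Finset.exists_ne_map_eq_of_card_lt_of_maps_to (s := Finset.range (p + 1)) (t := S)
      (by simp [hp]) (f := fun k => g (N + k)) (fun k _ => H1 (N + k) (Nat.le_add_right _ _))
  simp only [Finset.mem_range] at hk hl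
  wlog hlt : k < l generalizing k l
  · exact this l k hkl.symm hgkl.symm hl hk (by omega)
  set a := N + k with ha
  set q := l - k with hq'
  have hq0 : 0 < q := by omega
  have hqp : q ≤ p := by omega
  have hNa : N ≤ a := Nat.le_add_right _ _
  have hper0 : g (a + q) = g a := by
    have h1 : a + q = N + l := by omega
    rw [h1]; exact hgkl.symm
  have hper : ∀ n, a ≤ n → g (n + q) = g n := by
    intro n hn
    induction n, hn using Nat.le_induction with
    | base => exact hper0
    | succ n hn ih =>
      have h1 : g (n + 1 + q) = F (g (n + q)) := by
        have h2 := H2 (n + q) (by omega)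
        rw [← h2]; congr 1; omega
      rw [h1, ih, ← H2 n (by omega)]
  have hred : ∀ d, g (a + d % q) = g (a + d) := by
    intro d
    induction d using Nat.strong_induction_on with
    | _ d ih =>
      rcases lt_or_ge d q with h | h
      · rw [Nat.mod_eq_of_lt h]
      · have h2 : g (a + d) = g (a + (d - q)) := by
          have h3 := hper (a + (d - q)) (Nat.le_add_right _ _)
          rw [← h3]; congr 1; omega
        rw [h2, ← ih (d - q) (by omega), Nat.mod_eq_sub_mod h]
  have himg : (Finset.range q).image (fun r => g (a + r)) = S := by
    apply Finset.Subset.antisymm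
    · intro y hy
      simp only [Finset.mem_image, Finset.mem_range] at hy
      obtain ⟨r, -, rfl⟩ := hy
      exact H1 _ (by omega)
    · intro y hy
      obtain ⟨n, hn, rfl⟩ := H3 y hy a
      simp only [Finset.mem_image, Finset.mem_range]
      exact ⟨(n - a) % q, Nat.mod_lt _ hq0, by rw [hred]; congr 1; omega⟩
  have hcard_img : ((Finset.range q).image (fun r => g (a + r))).card = p := by rw [himg, hp]
  have hqeq : q = p := le_antisymm hqp (by
    calc p = ((Finset.range q).image (fun r => g (a + r))).card := hcard_img.symm
      _ ≤ (Finset.range q).card := Finset.card_image_le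
      _ = q := Finset.card_range q)
  have hinj : Set.InjOn (fun r => g (a + r)) (Finset.range q) :=
    Finset.injOn_of_card_image_eq (by rw [hcard_img, Finset.card_range, hqeq])
  refine ⟨a, hNa, ?_⟩
  intro i hi j hj
  have hi' : g i = g (a + (i - a) % q) := by rw [hred]; congr 1; omega
  have hj' : g j = g (a + (j - a) % q) := by rw [hred]; congr 1; omega
  rw [hi', hj']
  constructor
  · intro h
    have heq : (i - a) % q = (j - a) % q :=
      hinj (Finset.mem_coe.mpr (Finset.mem_range.mpr (Nat.mod_lt _ hq0)))
        (Finset.mem_coe.mpr (Finset.mem_range.mpr (Nat.mod_lt _ hq0))) h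
    rw [hqeq] at heq
    have h1 : (i - a) ≡ (j - a) [MOD p] := heq
    have h2 := h1.add_right a
    rwa [Nat.sub_add_cancel hi, Nat.sub_add_cancel hj] at h2
  · intro h
    have h1 : i ≡ j [MOD p] := h
    have h2 : (i - a) ≡ (j - a) [MOD p] := by
      apply Nat.ModEq.add_right_cancel' a
      rwa [Nat.sub_add_cancel hi, Nat.sub_add_cancel hj]
    have h3 : (i - a) % q = (j - a) % q := by rw [hqeq]; exact h2
    rw [h3]

end Aux


/-- if the ω-limit set of `x` is finite of cardinality `p`, then for
all sufficiently small `ε > 0` and every `m ≥ 1`, `C_m(x,n,ε) → 1/p` and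
`DET_m(x,n,ε) → 1` as `n → ∞`. -/
theorem stmt_4 {X : Type*} [MetricSpace X] [CompactSpace X]
    (f : X → X) (hf : Continuous f) (x : X) (p : ℕ)
    (hfin : (omegaSet f x).Finite) (hcard : (omegaSet f x).ncard = p) :
    ∃ ε₀ : ℝ, 0 < ε₀ ∧ ∀ ε : ℝ, 0 < ε → ε ≤ ε₀ → ∀ m : ℕ, 0 < m →
      Tendsto (fun n => corrSum f x m n ε) atTop (nhds (1 / (p : ℝ))) ∧
      Tendsto (fun n => detSum f x m n ε) atTop (nhds 1) := by
  classical
  obtain ⟨δ₀, hδ₀, hsep⟩ := RQA.exists_sep hfin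
  have hne := RQA.omega_nonempty f x
  have hp0 : 0 < p := by
    rw [← hcard]
    exact (Set.ncard_pos hfin).mpr hne
  have hpR : (0:ℝ) < p := by exact_mod_cast hp0
  have huc : UniformContinuous f := CompactSpace.uniformContinuous_of_continuous hf
  obtain ⟨η, hη, hmod⟩ := Metric.uniformContinuous_iff.mp huc (δ₀ / 3) (by linarith)
  refine ⟨δ₀ / 3, by linarith, ?_⟩
  intro ε hε hεle m hm
  set δ' : ℝ := min (ε / 2) (min (δ₀ / 6) η) with hδ'def
  have hδ'pos : 0 < δ' := lt_min (by linarith) (lt_min (by linarith) hη)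
  have hδ'1 : δ' ≤ ε / 2 := min_le_left _ _
  have hδ'2 : δ' ≤ δ₀ / 6 := (min_le_right _ _).trans (min_le_left _ _)
  have hδ'3 : δ' ≤ η := (min_le_right _ _).trans (min_le_right _ _)
  obtain ⟨N, hN⟩ := Filter.eventually_atTop.mp (RQA.omega_attract f x hδ'pos)
  have hchoice : ∀ n : ℕ, ∃ y : X, N ≤ n → y ∈ omegaSet f x ∧ dist (f^[n] x) y < δ' := by
    intro n
    by_cases h : N ≤ n
    · obtain ⟨y, hy1, hy2⟩ := hN n h
      exact ⟨y, fun _ => ⟨hy1, hy2⟩⟩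
    · exact ⟨x, fun hc => absurd hc h⟩
  choose g hg using hchoice
  have huniq : ∀ y ∈ omegaSet f x, ∀ z ∈ omegaSet f x, dist y z < δ₀ → y = z := by
    intro y hy z hz hd
    by_contra hne'
    exact absurd hd (not_lt.mpr (hsep y hy z hz hne'))
  have H2 : ∀ n, N ≤ n → g (n + 1) = f (g n) := by
    intro n hn
    obtain ⟨hg1, hd1⟩ := hg n hn
    obtain ⟨hg2, hd2⟩ := hg (n + 1) (hn.trans (Nat.le_succ n))
    have hfg : f (g n) ∈ omegaSet f x := RQA.omega_inv hf hg1
    have key : dist (f^[n + 1] x) (f (g n)) < δ₀ / 3 := by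
      rw [Function.iterate_succ_apply']
      exact hmod (lt_of_lt_of_le hd1 hδ'3)
    have htri : dist (g (n + 1)) (f (g n)) < δ₀ := by
      calc dist (g (n + 1)) (f (g n))
          ≤ dist (g (n + 1)) (f^[n + 1] x) + dist (f^[n + 1] x) (f (g n)) := dist_triangle _ _ _
        _ < δ' + δ₀ / 3 := add_lt_add (by rw [dist_comm]; exact hd2) key
        _ ≤ δ₀ := by linarith
    exact huniq _ hg2 _ hfg htri
  have H3 : ∀ y ∈ omegaSet f x, ∀ K, ∃ n, K ≤ n ∧ g n = y := by
    intro y hy K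
    obtain ⟨φ, hφ, hc⟩ := id hy
    have hev : ∀ᶠ k in Filter.atTop, dist (f^[φ k] x) y < δ' := by
      have := Metric.tendsto_nhds.mp hc δ' hδ'pos
      exact this
    obtain ⟨k, hk1, hk2⟩ := (hev.and (Filter.eventually_ge_atTop (max N K))).exists
    have hnk : max N K ≤ φ k := hk2.trans hφ.le_apply
    obtain ⟨hgn, hdn⟩ := hg (φ k) ((le_max_left _ _).trans hnk)
    refine ⟨φ k, (le_max_right _ _).trans hnk, ?_⟩
    apply huniq _ hgn _ hy
    calc dist (g (φ k)) y ≤ dist (g (φ k)) (f^[φ k] x) + dist (f^[φ k] x) y := dist_triangle _ _ _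
      _ < δ' + δ' := add_lt_add (by rw [dist_comm]; exact hdn) hk1
      _ ≤ δ₀ := by linarith
  obtain ⟨M, hMN, hkey⟩ := RQA.periodic_struct hfin.toFinset p
      (by rw [← Set.ncard_eq_toFinset_card _ hfin, hcard]) g f N
      (fun n hn => hfin.mem_toFinset.mpr (hg n hn).1) H2
      (fun y hy K => H3 y (hfin.mem_toFinset.mp hy) K)
  have hdist : ∀ i, M ≤ i → ∀ j, M ≤ j → (dist (f^[i] x) (f^[j] x) ≤ ε ↔ i % p = j % p) := by
    intro i hi j hj
    obtain ⟨hgi, hdi⟩ := hg i (hMN.trans hi)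
    obtain ⟨hgj, hdj⟩ := hg j (hMN.trans hj)
    constructor
    · intro hd
      by_contra hm'
      have hgne : g i ≠ g j := fun h => hm' ((hkey i hi j hj).mp h)
      have hs := hsep _ hgi _ hgj hgne
      have htri : dist (g i) (g j) ≤ δ' + ε + δ' := by
        calc dist (g i) (g j)
            ≤ dist (g i) (f^[i] x) + dist (f^[i] x) (f^[j] x) + dist (f^[j] x) (g j) :=
              dist_triangle4 _ _ _ _
          _ ≤ δ' + ε + δ' := by
              rw [dist_comm (g i)]
              exact add_le_add (add_le_add hdi.le hd) hdj.le
      linarith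
    · intro hm'
      have hgeq : g i = g j := (hkey i hi j hj).mpr hm'
      calc dist (f^[i] x) (f^[j] x)
          ≤ dist (f^[i] x) (g i) + dist (g i) (f^[j] x) := dist_triangle _ _ _
        _ = dist (f^[i] x) (g i) + dist (f^[j] x) (g j) := by rw [hgeq, dist_comm (g j) (f^[j] x)]
        _ ≤ ε := by linarith
  have hbowen : ∀ m' : ℕ, 0 < m' → ∀ i, M ≤ i → ∀ j, M ≤ j →
      ((∀ k < m', dist (f^[i + k] x) (f^[j + k] x) ≤ ε) ↔ i % p = j % p) := by
    intro m' hm' i hi j hj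
    constructor
    · intro h
      exact (hdist i hi j hj).mp (by simpa using h 0 hm')
    · intro h k _
      exact (hdist (i + k) (by omega) (j + k) (by omega)).mpr (Nat.ModEq.add_right k h)
  have hlim : ∀ m' : ℕ, 0 < m' →
      Tendsto (fun n => corrSum f x m' n ε) atTop (nhds (1 / (p : ℝ))) := by
    intro m' hm'
    set c : ℕ → ℕ → ℕ := fun r n => ((Finset.range n).filter (fun i => i % p = r)).card with hc
    have hcsum : ∀ n, ∑ r ∈ Finset.range p, c r n = n := by
      intro n
      have h := Finset.card_eq_sum_card_fiberwise (s := Finset.range n) (t := Finset.range p)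
        (f := fun i => i % p) (fun i _ => Finset.mem_range.mpr (Nat.mod_lt _ hp0))
      simpa using h.symm
    have hcb : ∀ n r, r < p → n ≤ p * c r n + p ∧ p * c r n ≤ n + p := by
      intro n r hr
      have hcr : c r n = (n + p - 1 - r) / p := RQA.count_res p r n hp0 hr
      have hdm := Nat.div_add_mod (n + p - 1 - r) p
      have hlt : (n + p - 1 - r) % p < p := Nat.mod_lt _ hp0
      rw [hcr]
      omega
    have hcR : ∀ n r, r < p → |(c r n : ℝ) - n / p| ≤ 1 := by
      intro n r hr
      obtain ⟨h1, h2⟩ := hcb n r hr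
      have h1R : (n : ℝ) ≤ p * c r n + p := by exact_mod_cast h1
      have h2R : (p : ℝ) * c r n ≤ n + p := by exact_mod_cast h2
      have habs : |(c r n : ℝ) - n / p| = |(p : ℝ) * c r n - n| / p := by
        rw [← abs_of_pos hpR, ← abs_div]
        congr 1
        field_simp
        rw [abs_of_pos hpR]
        ring
      rw [habs, div_le_one hpR, abs_le]
      constructor <;> linarith
    have hBbound : ∀ n : ℕ, |(((Finset.range n ×ˢ Finset.range n).filter
        (fun q : ℕ × ℕ => q.1 % p = q.2 % p)).card : ℝ) - (n : ℝ) ^ 2 / p| ≤ 2 * n := by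
      intro n
      rw [RQA.cardB p n hp0]
      push_cast
      have e1 : (∑ r ∈ Finset.range p, (c r n : ℝ) ^ 2) - (n : ℝ) ^ 2 / p
          = ∑ r ∈ Finset.range p, ((c r n : ℝ) ^ 2 - ((n : ℝ) / p) ^ 2) := by
        rw [Finset.sum_sub_distrib, Finset.sum_const, Finset.card_range, nsmul_eq_mul]
        congr 1
        field_simp
      rw [e1]
      calc |∑ r ∈ Finset.range p, ((c r n : ℝ) ^ 2 - ((n : ℝ) / p) ^ 2)|
          ≤ ∑ r ∈ Finset.range p, |(c r n : ℝ) ^ 2 - ((n : ℝ) / p) ^ 2| :=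
            Finset.abs_sum_le_sum_abs _ _
        _ ≤ ∑ r ∈ Finset.range p, ((c r n : ℝ) + (n : ℝ) / p) := by
            apply Finset.sum_le_sum
            intro r hr
            have hr' := Finset.mem_range.mp hr
            have h1 := hcR n r hr'
            have hnn : (0 : ℝ) ≤ (c r n : ℝ) + (n : ℝ) / p := by positivity
            calc |(c r n : ℝ) ^ 2 - ((n : ℝ) / p) ^ 2|
                = |(c r n : ℝ) + (n : ℝ) / p| * |(c r n : ℝ) - (n : ℝ) / p| := by
                  rw [← abs_mul]; congr 1; ring
              _ ≤ ((c r n : ℝ) + (n : ℝ) / p) * 1 := by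
                  apply mul_le_mul (le_of_eq (abs_of_nonneg hnn)) h1 (abs_nonneg _) hnn
              _ = _ := mul_one _
        _ = (∑ r ∈ Finset.range p, (c r n : ℝ)) + p * ((n : ℝ) / p) := by
            rw [Finset.sum_add_distrib, Finset.sum_const, Finset.card_range, nsmul_eq_mul]
        _ = 2 * n := by
            have hs : (∑ r ∈ Finset.range p, (c r n : ℝ)) = (n : ℝ) := by
              exact_mod_cast congrArg (Nat.cast : ℕ → ℝ) (hcsum n)
            rw [hs, mul_comm, div_mul_cancel₀ _ (ne_of_gt hpR)]
            ring
    have hAB : ∀ n : ℕ,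
        ((Finset.range n ×ˢ Finset.range n).filter
          (fun q : ℕ × ℕ => ∀ k < m', dist (f^[q.1 + k] x) (f^[q.2 + k] x) ≤ ε)).card
          ≤ ((Finset.range n ×ˢ Finset.range n).filter
              (fun q : ℕ × ℕ => q.1 % p = q.2 % p)).card + 2 * M * n ∧
        ((Finset.range n ×ˢ Finset.range n).filter
          (fun q : ℕ × ℕ => q.1 % p = q.2 % p)).card
          ≤ ((Finset.range n ×ˢ Finset.range n).filter
              (fun q : ℕ × ℕ => ∀ k < m', dist (f^[q.1 + k] x) (f^[q.2 + k] x) ≤ ε)).card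
            + 2 * M * n := by
      intro n
      set A := (Finset.range n ×ˢ Finset.range n).filter
        (fun q : ℕ × ℕ => ∀ k < m', dist (f^[q.1 + k] x) (f^[q.2 + k] x) ≤ ε) with hA
      set B := (Finset.range n ×ˢ Finset.range n).filter
        (fun q : ℕ × ℕ => q.1 % p = q.2 % p) with hB
      set E := (Finset.range n ×ˢ Finset.range n).filter
        (fun q : ℕ × ℕ => q.1 < M ∨ q.2 < M) with hE
      have hEcard : E.card ≤ 2 * M * n := by
        have hsub : E ⊆ (Finset.range M ×ˢ Finset.range n) ∪ (Finset.range n ×ˢ Finset.range M) := by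
          intro q hq
          simp only [hE, Finset.mem_filter, Finset.mem_product, Finset.mem_range] at hq
          simp only [Finset.mem_union, Finset.mem_product, Finset.mem_range]
          omega
        calc E.card ≤ _ := Finset.card_le_card hsub
          _ ≤ (Finset.range M ×ˢ Finset.range n).card + (Finset.range n ×ˢ Finset.range M).card :=
              Finset.card_union_le _ _
          _ = M * n + n * M := by
              simp [Finset.card_product]
          _ = 2 * M * n := by ring
      have hsub1 : A ⊆ B ∪ E := by
        intro q hq
        simp only [hA, Finset.mem_filter] at hq
        by_cases hMq : M ≤ q.1 ∧ M ≤ q.2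
        · apply Finset.mem_union_left
          simp only [hB, Finset.mem_filter]
          exact ⟨hq.1, (hbowen m' hm' q.1 hMq.1 q.2 hMq.2).mp hq.2⟩
        · apply Finset.mem_union_right
          simp only [hE, Finset.mem_filter]
          exact ⟨hq.1, by omega⟩
      have hsub2 : B ⊆ A ∪ E := by
        intro q hq
        simp only [hB, Finset.mem_filter] at hq
        by_cases hMq : M ≤ q.1 ∧ M ≤ q.2
        · apply Finset.mem_union_left
          simp only [hA, Finset.mem_filter]
          exact ⟨hq.1, (hbowen m' hm' q.1 hMq.1 q.2 hMq.2).mpr hq.2⟩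
        · apply Finset.mem_union_right
          simp only [hE, Finset.mem_filter]
          exact ⟨hq.1, by omega⟩
      constructor
      · calc A.card ≤ (B ∪ E).card := Finset.card_le_card hsub1
          _ ≤ B.card + E.card := Finset.card_union_le _ _
          _ ≤ B.card + 2 * M * n := Nat.add_le_add_left hEcard _
      · calc B.card ≤ (A ∪ E).card := Finset.card_le_card hsub2
          _ ≤ A.card + E.card := Finset.card_union_le _ _
          _ ≤ A.card + 2 * M * n := Nat.add_le_add_left hEcard _
    have hev : ∀ᶠ n in Filter.atTop, |corrSum f x m' n ε - 1 / (p : ℝ)| ≤ (2 * M + 2) / n := by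
      filter_upwards [Filter.eventually_ge_atTop 1] with n hn1
      have hnR : (0 : ℝ) < n := by exact_mod_cast hn1
      have hn2 : (0 : ℝ) < (n : ℝ) ^ 2 := by positivity
      obtain ⟨ha, hb⟩ := hAB n
      set Ac := ((Finset.range n ×ˢ Finset.range n).filter
        (fun q : ℕ × ℕ => ∀ k < m', dist (f^[q.1 + k] x) (f^[q.2 + k] x) ≤ ε)).card with hAc
      set Bc := ((Finset.range n ×ˢ Finset.range n).filter
        (fun q : ℕ × ℕ => q.1 % p = q.2 % p)).card with hBc
      have h1 : |(Ac : ℝ) - Bc| ≤ 2 * M * n := by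
        rw [abs_sub_le_iff]
        have haR : (Ac : ℝ) ≤ Bc + 2 * M * n := by exact_mod_cast ha
        have hbR : (Bc : ℝ) ≤ Ac + 2 * M * n := by exact_mod_cast hb
        constructor <;> linarith
      have h2 : |(Bc : ℝ) - (n : ℝ) ^ 2 / p| ≤ 2 * n := hBbound n
      have hcs : corrSum f x m' n ε = (Ac : ℝ) / (n : ℝ) ^ 2 := rfl
      rw [hcs]
      have keyeq : (Ac : ℝ) / (n : ℝ) ^ 2 - 1 / p
          = ((Ac : ℝ) - (n : ℝ) ^ 2 / p) / (n : ℝ) ^ 2 := by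
        rw [sub_div]
        congr 1
        rw [div_right_comm, div_self (ne_of_gt hn2)]
      rw [keyeq, abs_div, abs_of_pos hn2, div_le_iff₀ hn2]
      have hrhs : (2 * (M : ℝ) + 2) / n * (n : ℝ) ^ 2 = (2 * M + 2) * n := by
        field_simp
      rw [hrhs]
      calc |(Ac : ℝ) - (n : ℝ) ^ 2 / p|
          ≤ |(Ac : ℝ) - Bc| + |(Bc : ℝ) - (n : ℝ) ^ 2 / p| := abs_sub_le _ _ _
        _ ≤ 2 * M * n + 2 * n := add_le_add h1 h2
        _ = (2 * M + 2) * n := by ring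
    have h0 : Tendsto (fun n : ℕ => (2 * (M : ℝ) + 2) / n) atTop (nhds 0) :=
      tendsto_const_div_atTop_nhds_zero_nat _
    have hz : Tendsto (fun n => corrSum f x m' n ε - 1 / (p : ℝ)) atTop (nhds 0) :=
      squeeze_zero_norm' (hev.mono fun n h => by simpa [Real.norm_eq_abs] using h) h0
    have hfinal := hz.add_const (1 / (p : ℝ))
    simpa using hfinal
  have hdet : Tendsto (fun n => detSum f x m n ε) atTop (nhds 1) := by
    have h1 := hlim m hm
    have h2 := hlim 1 one_pos
    have hne' : (1 : ℝ) / p ≠ 0 := one_div_ne_zero (ne_of_gt hpR)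
    have := h1.div h2 hne'
    rw [div_self hne'] at this
    exact this
  exact ⟨hlim m hm, hdet⟩
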